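/- arXiv:1005.2358 — 3 statements merged into one kernel-verified Lean document; each statement's English description precedes it below -/
import Mathlib

section
/- For density matrices ρ, σ with σ positive definite, ‖ρ - σ‖₁² ≤ χ²_{1/2}(ρ,σ) := tr[(ρ-σ)σ^{-1/2}(ρ-σ)σ^{-1/2}]. -/
open Matrix
open scoped ComplexOrder

/-- The trace norm `‖A‖₁ = tr √(A†A)` of a complex matrix. -/
noncomputable def traceNorm {d : ℕ} (A : Matrix (Fin d) (Fin d) ℂ) : ℝ :=
  (((Matrix.posSemidef_conjTranspose_mul_self A).1.eigenvectorUnitary : Matrix (Fin d) (Fin d) ℂ) *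
      Matrix.diagonal (fun i => ((Real.sqrt ((Matrix.posSemidef_conjTranspose_mul_self A).1.eigenvalues i) : ℝ) : ℂ)) *
      star ((Matrix.posSemidef_conjTranspose_mul_self A).1.eigenvectorUnitary :
        Matrix (Fin d) (Fin d) ℂ)).trace.re

/-- Real matrix power of a Hermitian matrix via the spectral decomposition
(defined as `0` on the kernel for negative exponents, i.e. a pseudo-inverse,
and as the junk value `0` for non-Hermitian input). -/
noncomputable def mrpow {d : ℕ} (σ : Matrix (Fin d) (Fin d) ℂ) (α : ℝ) :
    Matrix (Fin d) (Fin d) ℂ :=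
  if hσ : σ.IsHermitian then
    (hσ.eigenvectorUnitary : Matrix (Fin d) (Fin d) ℂ) *
      Matrix.diagonal (fun i => ((hσ.eigenvalues i ^ α : ℝ) : ℂ)) *
      star (hσ.eigenvectorUnitary : Matrix (Fin d) (Fin d) ℂ)
  else 0

lemma trace_inner_aux {d : ℕ} (A B : Matrix (Fin d) (Fin d) ℂ) :
    (Aᴴ * B).trace = ∑ p : Fin d × Fin d, (starRingEnd ℂ) (A p.1 p.2) * B p.1 p.2 := by
  rw [Matrix.trace, Fintype.sum_prod_type]
  simp only [Matrix.diag, Matrix.mul_apply, Matrix.conjTranspose_apply]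
  rw [Finset.sum_comm]
  simp only [Complex.star_def]

lemma trace_cs {d : ℕ} (A B : Matrix (Fin d) (Fin d) ℂ) :
    ‖(Aᴴ * B).trace‖ ^ 2 ≤ ((Aᴴ * A).trace).re * ((Bᴴ * B).trace).re := by
  let x : EuclideanSpace ℂ (Fin d × Fin d) := WithLp.toLp 2 (fun p : Fin d × Fin d => A p.1 p.2)
  let y : EuclideanSpace ℂ (Fin d × Fin d) := WithLp.toLp 2 (fun p : Fin d × Fin d => B p.1 p.2)
  have hxy : (Aᴴ * B).trace = inner ℂ x y := by
    rw [trace_inner_aux]; simp [PiLp.inner_apply, RCLike.inner_apply, x, y, mul_comm]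
  have hxx : ((Aᴴ * A).trace).re = ‖x‖ ^ 2 := by
    rw [trace_inner_aux]
    have := @inner_self_eq_norm_sq ℂ _ _ _ _ x
    rw [← this]
    simp [PiLp.inner_apply, RCLike.inner_apply, x, -inner_self_eq_norm_sq_to_K]
  have hyy : ((Bᴴ * B).trace).re = ‖y‖ ^ 2 := by
    rw [trace_inner_aux]
    have := @inner_self_eq_norm_sq ℂ _ _ _ _ y
    rw [← this]
    simp [PiLp.inner_apply, RCLike.inner_apply, y, -inner_self_eq_norm_sq_to_K]
  rw [hxy, hxx, hyy, ← mul_pow]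
  exact pow_le_pow_left₀ (norm_nonneg _) (norm_inner_le_norm x y) 2

lemma trace_sq_nonneg {d : ℕ} (B : Matrix (Fin d) (Fin d) ℂ) :
    0 ≤ ((Bᴴ * B).trace).re := by
  rw [trace_inner_aux, Complex.re_sum]
  apply Finset.sum_nonneg
  intro p _
  rw [mul_comm, Complex.mul_conj]
  simp [Complex.normSq_nonneg]


variable {d : ℕ} {σ : Matrix (Fin d) (Fin d) ℂ}

lemma sandwich_mul (V A B : Matrix (Fin d) (Fin d) ℂ) (hV : star V * V = 1) :
    (V * A * star V) * (V * B * star V) = V * (A * B) * star V := by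
  have h : star V * (V * (B * star V)) = B * star V := by rw [← mul_assoc, hV, one_mul]
  simp only [mul_assoc, h]

lemma mrpow_def (hσ : σ.IsHermitian) (α : ℝ) :
    mrpow σ α = (hσ.eigenvectorUnitary : Matrix (Fin d) (Fin d) ℂ) *
      Matrix.diagonal (fun i => ((hσ.eigenvalues i ^ α : ℝ) : ℂ)) *
      star (hσ.eigenvectorUnitary : Matrix (Fin d) (Fin d) ℂ) := dif_pos hσ

lemma mrpow_mul_mrpow (hσ : σ.PosDef) (α β : ℝ) :
    mrpow σ α * mrpow σ β = mrpow σ (α + β) := by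
  have hV : star (hσ.1.eigenvectorUnitary : Matrix (Fin d) (Fin d) ℂ) *
      (hσ.1.eigenvectorUnitary : Matrix (Fin d) (Fin d) ℂ) = 1 :=
    Matrix.mem_unitaryGroup_iff'.mp (hσ.1.eigenvectorUnitary).2
  rw [mrpow_def hσ.1, mrpow_def hσ.1, mrpow_def hσ.1, sandwich_mul _ _ _ hV,
    Matrix.diagonal_mul_diagonal]
  have : (fun i => ((hσ.1.eigenvalues i ^ α : ℝ) : ℂ) * ((hσ.1.eigenvalues i ^ β : ℝ) : ℂ))
      = fun i => ((hσ.1.eigenvalues i ^ (α + β) : ℝ) : ℂ) := by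
    funext i
    rw [← Complex.ofReal_mul, ← Real.rpow_add (hσ.eigenvalues_pos i)]
  rw [this]

lemma diag_herm (hσ : σ.IsHermitian) (α : ℝ) :
    (Matrix.diagonal (fun i => ((hσ.eigenvalues i ^ α : ℝ) : ℂ)))ᴴ
      = Matrix.diagonal (fun i => ((hσ.eigenvalues i ^ α : ℝ) : ℂ)) := by
  rw [Matrix.diagonal_conjTranspose]
  congr 1
  funext i
  simp [Pi.star_def]

lemma mrpow_isHermitian (hσ : σ.IsHermitian) (α : ℝ) : (mrpow σ α).IsHermitian := by
  rw [mrpow_def hσ, Matrix.IsHermitian, Matrix.star_eq_conjTranspose,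
    Matrix.conjTranspose_mul, Matrix.conjTranspose_mul, Matrix.conjTranspose_conjTranspose,
    diag_herm hσ, ← mul_assoc]

lemma mrpow_one (hσ : σ.PosDef) : mrpow σ 1 = σ := by
  rw [mrpow_def hσ.1]
  have : (fun i => ((hσ.1.eigenvalues i ^ (1:ℝ) : ℝ) : ℂ))
      = (RCLike.ofReal ∘ hσ.1.eigenvalues) := by
    funext i; simp [Real.rpow_one]
  rw [this]
  exact hσ.1.spectral_theorem.symm

lemma mrpow_zero (hσ : σ.PosDef) : mrpow σ 0 = 1 := by
  rw [mrpow_def hσ.1]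
  have hV : (hσ.1.eigenvectorUnitary : Matrix (Fin d) (Fin d) ℂ) *
      star (hσ.1.eigenvectorUnitary : Matrix (Fin d) (Fin d) ℂ) = 1 :=
    Matrix.mem_unitaryGroup_iff.mp (hσ.1.eigenvectorUnitary).2
  have : (fun i => ((hσ.1.eigenvalues i ^ (0:ℝ) : ℝ) : ℂ)) = fun _ => (1:ℂ) := by
    funext i; simp [Real.rpow_zero]
  rw [this, Matrix.diagonal_one, mul_one, hV]

lemma real_diag_star (f : Fin d → ℝ) :
    (star fun i => ((f i : ℝ) : ℂ)) = fun i => ((f i : ℝ) : ℂ) :=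
  funext fun i => by simp [Pi.star_def]

lemma real_sandwich_herm (V : Matrix (Fin d) (Fin d) ℂ) (f : Fin d → ℝ) :
    (V * Matrix.diagonal (fun i => ((f i : ℝ) : ℂ)) * star V).IsHermitian := by
  rw [Matrix.IsHermitian, Matrix.star_eq_conjTranspose, Matrix.conjTranspose_mul,
    Matrix.conjTranspose_mul, Matrix.conjTranspose_conjTranspose,
    Matrix.diagonal_conjTranspose, real_diag_star, ← mul_assoc]

-- sanity check: RCLike.ofReal on ℂ is Complex.ofReal
example (f : Fin d → ℝ) : Matrix.diagonal (RCLike.ofReal ∘ f)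
    = Matrix.diagonal (fun i => ((f i : ℝ) : ℂ)) := rfl

section delta
variable {Δ : Matrix (Fin d) (Fin d) ℂ} (hΔ : Δ.IsHermitian)

local notation "W" => (hΔ.eigenvectorUnitary : Matrix (Fin d) (Fin d) ℂ)
local notation "lam" => hΔ.eigenvalues

lemma hW' : star W * W = 1 := Matrix.mem_unitaryGroup_iff'.mp (hΔ.eigenvectorUnitary).2
lemma hW : W * star W = 1 := Matrix.mem_unitaryGroup_iff.mp (hΔ.eigenvectorUnitary).2

noncomputable def signU : Matrix (Fin d) (Fin d) ℂ :=
  W * Matrix.diagonal (fun i => (((if 0 ≤ lam i then 1 else -1 : ℝ)) : ℂ)) * star W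

noncomputable def absM : Matrix (Fin d) (Fin d) ℂ :=
  W * Matrix.diagonal (fun i => ((|lam i| : ℝ) : ℂ)) * star W

lemma signU_herm : (signU hΔ).IsHermitian := real_sandwich_herm _ _
lemma absM_herm : (absM hΔ).IsHermitian := real_sandwich_herm _ _

lemma signU_mul_self : signU hΔ * signU hΔ = 1 := by
  rw [signU, sandwich_mul _ _ _ (hW' hΔ), Matrix.diagonal_mul_diagonal]
  have : (fun i => (((if 0 ≤ lam i then 1 else -1 : ℝ)) : ℂ) *
      (((if 0 ≤ lam i then 1 else -1 : ℝ)) : ℂ)) = fun _ => (1 : ℂ) := by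
    funext i; split_ifs <;> norm_num
  rw [this, Matrix.diagonal_one, mul_one, hW hΔ]

lemma signU_mul_delta : signU hΔ * Δ = absM hΔ := by
  have e : Δ = W * Matrix.diagonal (fun i => ((lam i : ℝ) : ℂ)) * star W := hΔ.spectral_theorem
  have main : signU hΔ * (W * Matrix.diagonal (fun i => ((lam i : ℝ) : ℂ)) * star W)
      = absM hΔ := by
    rw [signU, absM, sandwich_mul _ _ _ (hW' hΔ), Matrix.diagonal_mul_diagonal]
    have : (fun i => (((if 0 ≤ lam i then 1 else -1 : ℝ)) : ℂ) * ((lam i : ℝ) : ℂ))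
        = fun i => ((|lam i| : ℝ) : ℂ) := by
      funext i
      rw [← Complex.ofReal_mul]
      congr 1
      split_ifs with h
      · rw [one_mul, abs_of_nonneg h]
      · rw [neg_one_mul, abs_of_neg (lt_of_not_ge h)]
    rw [this]
  rw [← e] at main
  exact main

lemma absM_posSemidef : (absM hΔ).PosSemidef := by
  have h : (Matrix.diagonal (fun i => ((|lam i| : ℝ) : ℂ))).PosSemidef :=
    Matrix.posSemidef_diagonal_iff.mpr fun i => by
      exact Complex.zero_le_real.mpr (abs_nonneg _)
  simpa [absM, Matrix.star_eq_conjTranspose] using h.mul_mul_conjTranspose_same W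

lemma absM_sq : absM hΔ ^ 2 = Δᴴ * Δ := by
  have e : Δ = W * Matrix.diagonal (fun i => ((lam i : ℝ) : ℂ)) * star W := hΔ.spectral_theorem
  have main : absM hΔ ^ 2
      = (W * Matrix.diagonal (fun i => ((lam i : ℝ) : ℂ)) * star W)
        * (W * Matrix.diagonal (fun i => ((lam i : ℝ) : ℂ)) * star W) := by
    rw [pow_two, absM, sandwich_mul _ _ _ (hW' hΔ), sandwich_mul _ _ _ (hW' hΔ),
      Matrix.diagonal_mul_diagonal, Matrix.diagonal_mul_diagonal]
    have : (fun i => ((|lam i| : ℝ) : ℂ) * ((|lam i| : ℝ) : ℂ))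
        = fun i => ((lam i : ℝ) : ℂ) * ((lam i : ℝ) : ℂ) := by
      funext i
      rw [← Complex.ofReal_mul, ← Complex.ofReal_mul, ← sq, ← sq, sq_abs]
    rw [this]
  rw [← e] at main
  rw [hΔ.eq]
  exact main

open scoped MatrixOrder in
lemma sqrt_eq_absM :
    ((Matrix.posSemidef_conjTranspose_mul_self Δ).1.eigenvectorUnitary : Matrix (Fin d) (Fin d) ℂ) *
      Matrix.diagonal (fun i => ((Real.sqrt ((Matrix.posSemidef_conjTranspose_mul_self Δ).1.eigenvalues i) : ℝ) : ℂ)) *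
      star ((Matrix.posSemidef_conjTranspose_mul_self Δ).1.eigenvectorUnitary :
        Matrix (Fin d) (Fin d) ℂ) = absM hΔ := by
  have hA0 : (0 : Matrix (Fin d) (Fin d) ℂ) ≤ Δᴴ * Δ :=
    (Matrix.posSemidef_conjTranspose_mul_self Δ).nonneg
  have hB0 : (0 : Matrix (Fin d) (Fin d) ℂ) ≤ absM hΔ := (absM_posSemidef hΔ).nonneg
  have h1 : cfc Real.sqrt (Δᴴ * Δ) = absM hΔ := by
    rw [← cfcₙ_eq_cfc, ← CFC.sqrt_eq_real_sqrt _ hA0]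
    exact CFC.sqrt_unique ((pow_two _).symm.trans (absM_sq hΔ)) hB0
  rw [← h1, (Matrix.posSemidef_conjTranspose_mul_self Δ).1.cfc_eq, Matrix.IsHermitian.cfc,
    Unitary.conjStarAlgAut_apply]
  rfl

lemma absM_trace : (absM hΔ).trace = ((∑ i, |lam i| : ℝ) : ℂ) := by
  rw [absM, Matrix.trace_mul_cycle, hW' hΔ, one_mul, Matrix.trace_diagonal]
  push_cast
  rfl

end delta

lemma herm3 {d : ℕ} {A B : Matrix (Fin d) (Fin d) ℂ} (hA : A.IsHermitian)
    (hB : B.IsHermitian) : (A * B * A)ᴴ = A * B * A := by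
  rw [Matrix.conjTranspose_mul, Matrix.conjTranspose_mul, hA.eq, hB.eq, ← mul_assoc]


/-- For density matrices `ρ, σ` with `σ` positive definite,
`‖ρ - σ‖₁² ≤ χ²_{1/2}(ρ,σ) = tr[(ρ-σ)σ^{-1/2}(ρ-σ)σ^{-1/2}]`. -/
theorem traceDist_sq_le_chi_sq_half (d : ℕ) (ρ σ : Matrix (Fin d) (Fin d) ℂ)
    (hρ : ρ.PosSemidef) (hρtr : ρ.trace = 1)
    (hσ : σ.PosDef) (hσtr : σ.trace = 1) :
    traceNorm (ρ - σ) ^ 2 ≤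
      (((ρ - σ) * mrpow σ (-(1/2)) * (ρ - σ) * mrpow σ (-(1/2))).trace).re := by
  set Δ := ρ - σ with hΔdef
  set R := mrpow σ (-(1/2)) with hRdef
  have hΔ : Δ.IsHermitian := hρ.1.sub hσ.1
  set U := signU hΔ with hUdef
  set P := mrpow σ (1/4 : ℝ) with hPdef
  set Q := mrpow σ (-(1/4) : ℝ) with hQdef
  set S := mrpow σ (1/2 : ℝ) with hSdef
  have hPQ : P * Q = 1 := by
    rw [hPdef, hQdef, mrpow_mul_mrpow hσ, show (1/4 + -(1/4) : ℝ) = 0 by norm_num,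
      mrpow_zero hσ]
  have hQP : Q * P = 1 := by
    rw [hPdef, hQdef, mrpow_mul_mrpow hσ, show (-(1/4) + 1/4 : ℝ) = 0 by norm_num,
      mrpow_zero hσ]
  have hPP : P * P = S := by
    rw [hPdef, hSdef, mrpow_mul_mrpow hσ, show (1/4 + 1/4 : ℝ) = 1/2 by norm_num]
  have hQQ : Q * Q = R := by
    rw [hQdef, hRdef, mrpow_mul_mrpow hσ, show (-(1/4) + -(1/4) : ℝ) = -(1/2) by norm_num]
  have hSS : S * S = σ := by
    rw [hSdef, mrpow_mul_mrpow hσ, show (1/2 + 1/2 : ℝ) = 1 by norm_num, mrpow_one hσ]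
  have hPh : P.IsHermitian := mrpow_isHermitian hσ.1 _
  have hQh : Q.IsHermitian := mrpow_isHermitian hσ.1 _
  have hSh : S.IsHermitian := mrpow_isHermitian hσ.1 _
  have hUU : U * U = 1 := signU_mul_self hΔ
  have hUSUh : (U * S * U)ᴴ = U * S * U := herm3 (signU_herm hΔ) hSh
  have hCh : (P * U * P)ᴴ = P * U * P := herm3 hPh (signU_herm hΔ)
  have hDh : (Q * Δ * Q)ᴴ = Q * Δ * Q := herm3 hQh hΔ
  set t := ∑ i, |hΔ.eigenvalues i| with htdef
  have htnn : 0 ≤ t := Finset.sum_nonneg fun i _ => abs_nonneg _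
  have hTN : traceNorm Δ = t := by
    rw [traceNorm, sqrt_eq_absM hΔ, absM_trace hΔ, Complex.ofReal_re]
  have hUΔtr : (U * Δ).trace = (t : ℂ) := by
    rw [hUdef, signU_mul_delta hΔ, absM_trace hΔ]
  have h_tr1 : ((P * U * P) * (Q * Δ * Q)).trace = (t : ℂ) := by
    have e0 : (P*U*P)*(Q*Δ*Q) = P*U*(P*Q)*Δ*Q := by noncomm_ring
    rw [e0, hPQ, mul_one, Matrix.trace_mul_comm]
    have e1 : Q * (P*U*Δ) = (Q*P)*(U*Δ) := by noncomm_ring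
    rw [e1, hQP, one_mul, hUΔtr]
  have hCC : ((P*U*P) * (P*U*P)).trace = ((U*S*U)*S).trace := by
    have e0 : (P*U*P)*(P*U*P) = P*(U*(P*P)*U)*P := by noncomm_ring
    rw [e0, hPP, Matrix.trace_mul_cycle, hPP, Matrix.trace_mul_comm]
  have hDD : ((Q*Δ*Q) * (Q*Δ*Q)).trace = (Δ * R * Δ * R).trace := by
    have e0 : (Q*Δ*Q)*(Q*Δ*Q) = Q*(Δ*(Q*Q)*Δ)*Q := by noncomm_ring
    rw [e0, hQQ, Matrix.trace_mul_cycle, hQQ, Matrix.trace_mul_comm]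
  have hUSUS1 : ((U*S*U)ᴴ * (U*S*U)).trace = 1 := by
    rw [hUSUh]
    have e0 : (U*S*U)*(U*S*U) = U*(S*(U*U)*S)*U := by noncomm_ring
    rw [e0, hUU, mul_one, hSS, Matrix.trace_mul_cycle, hUU, one_mul, hσtr]
  have hSS1 : (Sᴴ * S).trace = 1 := by rw [hSh.eq, hSS, hσtr]
  have hb := trace_cs (U*S*U) S
  rw [hUSUS1, hSS1] at hb
  simp only [Complex.one_re, mul_one] at hb
  rw [hUSUh] at hb
  have hb2 : (((U*S*U)*S).trace).re ≤ 1 := by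
    have h1 : ‖((U*S*U)*S).trace‖ ≤ 1 := by
      nlinarith [norm_nonneg (((U*S*U)*S).trace)]
    exact (Complex.re_le_norm _).trans h1
  have ha := trace_cs (P*U*P) (Q*Δ*Q)
  rw [hCh, hDh, h_tr1, hCC, hDD] at ha
  have hnn : 0 ≤ ((Δ * R * Δ * R).trace).re := by
    have h0 := trace_sq_nonneg (Q*Δ*Q)
    rw [hDh, hDD] at h0
    exact h0
  calc traceNorm Δ ^ 2 = ‖(t : ℂ)‖ ^ 2 := by
        rw [hTN, Complex.norm_real, Real.norm_eq_abs, abs_of_nonneg htnn]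
    _ ≤ (((U*S*U)*S).trace).re * ((Δ * R * Δ * R).trace).re := ha
    _ ≤ 1 * ((Δ * R * Δ * R).trace).re := mul_le_mul_of_nonneg_right hb2 hnn
    _ = _ := one_mul _
end

section
/- For γ ∈ (0,1] and density matrices ρ, σ with σ positive definite and supp(ρ) ⊆ supp(σ), the relative entropy satisfies tr[ρ(log ρ - log σ)] ≤ (1/γ)(tr[ρ^{1+γ} σ^{-γ}] - 1). -/
open Matrix
open scoped ComplexOrder

section Aux

lemma scalar_ineq' {p q γ : ℝ} (hp : 0 ≤ p) (hq : 0 < q) (hγ : 0 < γ) :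
    p * Real.log p - p * Real.log q ≤ (1/γ) * (p ^ (1+γ) * q ^ (-γ) - p) := by
  rcases eq_or_lt_of_le hp with h | hp
  · simp [← h, Real.zero_rpow (by positivity : (1:ℝ)+γ ≠ 0)]
  · have ht : 0 < p / q := div_pos hp hq
    have h1 : Real.log ((p/q) ^ γ) ≤ (p/q) ^ γ - 1 :=
      Real.log_le_sub_one_of_pos (Real.rpow_pos_of_pos ht γ)
    rw [Real.log_rpow ht] at h1
    have h2 : Real.log (p/q) ≤ (1/γ) * ((p/q) ^ γ - 1) := by
      rw [one_div, inv_mul_eq_div, le_div_iff₀ hγ]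
      linarith [h1]
    have h3 : p * Real.log (p/q) ≤ p * ((1/γ) * ((p/q) ^ γ - 1)) :=
      mul_le_mul_of_nonneg_left h2 hp.le
    rw [Real.log_div (ne_of_gt hp) (ne_of_gt hq)] at h3
    have h4 : p * ((p/q) ^ γ) = p ^ (1+γ) * q ^ (-γ) := by
      rw [Real.div_rpow hp.le hq.le, Real.rpow_neg hq.le,
        Real.rpow_add hp, Real.rpow_one, div_eq_mul_inv]
      ring
    calc p * Real.log p - p * Real.log q = p * (Real.log p - Real.log q) := by ring
    _ ≤ p * ((1/γ) * ((p/q) ^ γ - 1)) := h3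
    _ = (1/γ) * (p * ((p/q)^γ) - p) := by ring
    _ = (1/γ) * (p ^ (1+γ) * q ^ (-γ) - p) := by rw [h4]

lemma trace_formula' {d : ℕ} (U V : Matrix (Fin d) (Fin d) ℂ) (f g : Fin d → ℝ) :
    (((U * Matrix.diagonal (fun i => (f i : ℂ)) * star U) *
      (V * Matrix.diagonal (fun j => (g j : ℂ)) * star V)).trace).re
    = ∑ i, ∑ j, f i * g j * Complex.normSq ((star U * V) i j) := by
  have h1 : (U * Matrix.diagonal (fun i => (f i : ℂ)) * star U) *
      (V * Matrix.diagonal (fun j => (g j : ℂ)) * star V)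
      = U * (Matrix.diagonal (fun i => (f i : ℂ)) * (star U * V) *
        Matrix.diagonal (fun j => (g j : ℂ)) * star V) := by
    noncomm_ring
  rw [h1, Matrix.trace_mul_comm]
  have h2 : (Matrix.diagonal (fun i => (f i : ℂ)) * (star U * V) *
        Matrix.diagonal (fun j => (g j : ℂ)) * star V) * U
      = Matrix.diagonal (fun i => (f i : ℂ)) * (star U * V) *
        Matrix.diagonal (fun j => (g j : ℂ)) * star (star U * V) := by
    rw [StarMul.star_mul, star_star, Matrix.mul_assoc]
  rw [h2]
  set W := star U * V with hW
  have key : ∀ i, (Matrix.diagonal (fun i => (f i : ℂ)) * W *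
      Matrix.diagonal (fun j => (g j : ℂ)) * star W).diag i
      = ((∑ j, f i * g j * Complex.normSq (W i j) : ℝ) : ℂ) := by
    intro i
    simp only [Matrix.diag_apply, Matrix.mul_apply, Matrix.mul_diagonal,
      Matrix.diagonal_mul, Matrix.star_apply, Matrix.diagonal_apply, ite_mul,
      zero_mul, mul_ite, mul_zero, Finset.sum_ite_eq, Finset.sum_ite_eq',
      Finset.mem_univ, if_true]
    push_cast
    refine Finset.sum_congr rfl fun j _ => ?_
    calc ((f i : ℂ) * W i j * (g j : ℂ)) * (starRingEnd ℂ) (W i j)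
        = (f i : ℂ) * (g j : ℂ) * (W i j * (starRingEnd ℂ) (W i j)) := by ring
      _ = (f i : ℂ) * (g j : ℂ) * ((Complex.normSq (W i j) : ℝ) : ℂ) := by
          rw [Complex.mul_conj]
  rw [Matrix.trace]
  calc (∑ i, (Matrix.diagonal (fun i => (f i : ℂ)) * W *
          Matrix.diagonal (fun j => (g j : ℂ)) * star W).diag i).re
      = ((∑ i, ∑ j, f i * g j * Complex.normSq (W i j) : ℝ) : ℂ).re := by
        rw [Finset.sum_congr rfl fun i _ => key i]; push_cast; rfl
    _ = _ := Complex.ofReal_re _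

lemma row_sum_normSq' {d : ℕ} (W : Matrix (Fin d) (Fin d) ℂ) (h : W * star W = 1)
    (i : Fin d) : ∑ j, Complex.normSq (W i j) = 1 := by
  have h2 : ∑ j, W i j * (starRingEnd ℂ) (W i j) = 1 := by
    simpa [Matrix.mul_apply, Matrix.star_apply, Matrix.one_apply] using
      congrFun (congrFun h i) i
  rw [Finset.sum_congr rfl fun j _ => Complex.mul_conj (W i j)] at h2
  exact_mod_cast h2

lemma sum_eigenvalues_eq_one' {d : ℕ} (A : Matrix (Fin d) (Fin d) ℂ)
    (hA : A.IsHermitian) (hAtr : A.trace = 1) : ∑ i, hA.eigenvalues i = 1 := by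
  have h1 : ((hA.eigenvectorUnitary : Matrix (Fin d) (Fin d) ℂ) *
      (Matrix.diagonal (fun i => ((hA.eigenvalues i : ℝ) : ℂ)) *
      star (hA.eigenvectorUnitary : Matrix (Fin d) (Fin d) ℂ))).trace = 1 := by
    have hS : A = (hA.eigenvectorUnitary : Matrix (Fin d) (Fin d) ℂ) *
        (Matrix.diagonal (fun i => ((hA.eigenvalues i : ℝ) : ℂ)) *
        star (hA.eigenvectorUnitary : Matrix (Fin d) (Fin d) ℂ)) := by
      rw [← Matrix.mul_assoc]; exact hA.spectral_theorem
    rw [← hS]; exact hAtr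
  rw [Matrix.trace_mul_comm, Matrix.mul_assoc,
    Unitary.star_mul_self_of_mem hA.eigenvectorUnitary.2, Matrix.mul_one] at h1
  simp only [Matrix.trace_diagonal] at h1
  exact_mod_cast h1

end Aux

/-- Matrix logarithm of a Hermitian matrix via the spectral decomposition (with the
convention `Real.log 0 = 0` on the kernel, and junk value `0` for non-Hermitian input). -/
noncomputable def mlog {d : ℕ} (σ : Matrix (Fin d) (Fin d) ℂ) :
    Matrix (Fin d) (Fin d) ℂ :=
  if hσ : σ.IsHermitian then
    (hσ.eigenvectorUnitary : Matrix (Fin d) (Fin d) ℂ) *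
      Matrix.diagonal (fun i => ((Real.log (hσ.eigenvalues i) : ℝ) : ℂ)) *
      star (hσ.eigenvectorUnitary : Matrix (Fin d) (Fin d) ℂ)
  else 0

/-- Quantum relative entropy `S(ρ‖σ) = tr[ρ log ρ] - tr[ρ log σ]`, with
`tr[ρ log ρ] = ∑ k, λ_k log λ_k` over the eigenvalues of `ρ` (so `0 log 0 = 0`). -/
noncomputable def relEntropy {d : ℕ} (ρ σ : Matrix (Fin d) (Fin d) ℂ)
    (hρ : ρ.IsHermitian) : ℝ :=
  (∑ k, hρ.eigenvalues k * Real.log (hρ.eigenvalues k)) - ((ρ * mlog σ).trace).re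

/-- For `γ ∈ (0,1]` and density matrices `ρ, σ` with `σ` positive definite
(so that `supp ρ ⊆ supp σ` automatically),
`tr[ρ(log ρ - log σ)] ≤ (1/γ)(tr[ρ^{1+γ} σ^{-γ}] - 1)`. -/
theorem relEntropy_le_power_bound (d : ℕ) (ρ σ : Matrix (Fin d) (Fin d) ℂ)
    (γ : ℝ) (hγ : γ ∈ Set.Ioc (0 : ℝ) 1)
    (hρ : ρ.PosSemidef) (hρtr : ρ.trace = 1)
    (hσ : σ.PosDef) (hσtr : σ.trace = 1) :
    relEntropy ρ σ hρ.1 ≤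
      (1 / γ) * (((mrpow ρ (1 + γ) * mrpow σ (-γ)).trace).re - 1) := by
  obtain ⟨hγ0, hγ1⟩ := hγ
  set U := (hρ.1.eigenvectorUnitary : Matrix (Fin d) (Fin d) ℂ) with hUdef
  set V := (hσ.1.eigenvectorUnitary : Matrix (Fin d) (Fin d) ℂ) with hVdef
  set p := hρ.1.eigenvalues with hpdef
  set q := hσ.1.eigenvalues with hqdef
  set W := star U * V with hWdef
  set c := fun i j => Complex.normSq (W i j) with hcdef
  have hWW : W * star W = 1 := by
    have h1 : star W = star V * U := by rw [hWdef, StarMul.star_mul, star_star]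
    rw [h1]
    calc (star U * V) * (star V * U) = star U * ((V * star V) * U) := by noncomm_ring
    _ = 1 := by
        rw [Unitary.mul_star_self_of_mem hσ.1.eigenvectorUnitary.2, one_mul,
          Unitary.star_mul_self_of_mem hρ.1.eigenvectorUnitary.2]
  have hrow : ∀ i, ∑ j, c i j = 1 := row_sum_normSq' W hWW
  have hp1 : ∑ i, p i = 1 := sum_eigenvalues_eq_one' ρ hρ.1 hρtr
  have hpnn : ∀ i, 0 ≤ p i := hρ.eigenvalues_nonneg
  have hqpos : ∀ j, 0 < q j := hσ.eigenvalues_pos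
  have hSρ : ρ = U * Matrix.diagonal (fun i => ((p i : ℝ) : ℂ)) * star U :=
    hρ.1.spectral_theorem
  have hA : ((ρ * mlog σ).trace).re = ∑ i, ∑ j, p i * Real.log (q j) * c i j := by
    have e1 : mlog σ = V * Matrix.diagonal (fun j => ((Real.log (q j) : ℝ) : ℂ)) * star V := by
      rw [mlog, dif_pos hσ.1]
    conv_lhs => rw [hSρ, e1]
    exact trace_formula' U V p (fun j => Real.log (q j))
  have hB : ((mrpow ρ (1 + γ) * mrpow σ (-γ)).trace).re
      = ∑ i, ∑ j, p i ^ (1+γ) * q j ^ (-γ) * c i j := by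
    have e1 : mrpow ρ (1 + γ) = U * Matrix.diagonal (fun i => ((p i ^ (1+γ) : ℝ) : ℂ)) * star U := by
      rw [mrpow, dif_pos hρ.1]
    have e2 : mrpow σ (-γ) = V * Matrix.diagonal (fun j => ((q j ^ (-γ) : ℝ) : ℂ)) * star V := by
      rw [mrpow, dif_pos hσ.1]
    conv_lhs => rw [e1, e2]
    exact trace_formula' U V (fun i => p i ^ (1+γ)) (fun j => q j ^ (-γ))
  have hent : ∑ k, p k * Real.log (p k) = ∑ i, ∑ j, (p i * Real.log (p i)) * c i j := by
    refine Finset.sum_congr rfl fun i _ => ?_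
    rw [← Finset.mul_sum, hrow i, mul_one]
  have h1' : (1:ℝ) = ∑ i, ∑ j, p i * c i j := by
    calc (1:ℝ) = ∑ i, p i := hp1.symm
    _ = ∑ i, p i * ∑ j, c i j := by
        refine Finset.sum_congr rfl fun i _ => ?_; rw [hrow i, mul_one]
    _ = ∑ i, ∑ j, p i * c i j := by simp [Finset.mul_sum]
  rw [relEntropy, hA, hB]
  calc (∑ k, p k * Real.log (p k)) - (∑ i, ∑ j, p i * Real.log (q j) * c i j)
      = ∑ i, ∑ j, (p i * Real.log (p i) - p i * Real.log (q j)) * c i j := by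
        rw [hent, ← Finset.sum_sub_distrib]
        refine Finset.sum_congr rfl fun i _ => ?_
        rw [← Finset.sum_sub_distrib]
        refine Finset.sum_congr rfl fun j _ => ?_
        ring
    _ ≤ ∑ i, ∑ j, ((1/γ) * (p i ^ (1+γ) * q j ^ (-γ) - p i)) * c i j := by
        refine Finset.sum_le_sum fun i _ => Finset.sum_le_sum fun j _ => ?_
        exact mul_le_mul_of_nonneg_right (scalar_ineq' (hpnn i) (hqpos j) hγ0)
          (Complex.normSq_nonneg _)
    _ = (1/γ) * ((∑ i, ∑ j, p i ^ (1+γ) * q j ^ (-γ) * c i j) - ∑ i, ∑ j, p i * c i j) := by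
        have e : ∀ i j, (1/γ) * (p i ^ (1+γ) * q j ^ (-γ) - p i) * c i j
            = (1/γ) * (p i ^ (1+γ) * q j ^ (-γ) * c i j - p i * c i j) := fun i j => by ring
        simp_rw [e, ← Finset.mul_sum]
        congr 1
        rw [← Finset.sum_sub_distrib]
        exact Finset.sum_congr rfl fun i _ => by rw [Finset.sum_sub_distrib, Finset.mul_sum]
    _ = (1/γ) * ((∑ i, ∑ j, p i ^ (1+γ) * q j ^ (-γ) * c i j) - 1) := by rw [← h1']
end

section
/- Trace-norm contraction is upper bounded by the square root of χ²_α contraction: for any quantum channel T and α ∈ (0,1], sup over density matrices ρ,σ of ‖T(ρ)-T(σ)‖₁/‖ρ-σ‖₁ ≤ √(sup over ρ,σ of χ²_α(T(ρ),T(σ))/χ²_α(ρ,σ)). Key lemma: for traceless Hermitian N with P = |N|/‖N‖₁, tr[N P^{-α} N P^{α-1}] = ‖N‖₁². -/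
open Matrix
open scoped ComplexOrder

/-- The mean α-family of quantum χ²-divergences
`χ²_α(ρ,σ) = tr[(ρ-σ) σ^{-α} (ρ-σ) σ^{α-1}]` (with pseudo-inverse powers of `σ`). -/
noncomputable def chiAlpha {d : ℕ} (α : ℝ) (ρ σ : Matrix (Fin d) (Fin d) ℂ) : ℝ :=
  (((ρ - σ) * mrpow σ (-α) * (ρ - σ) * mrpow σ (α - 1)).trace).re

/-- A completely positive trace-preserving map (quantum channel), presented by
a Kraus decomposition `T(X) = ∑ μ, K μ * X * (K μ)ᴴ` with `∑ μ, (K μ)ᴴ * K μ = 1`. -/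
def IsCPTP {d : ℕ} (T : Matrix (Fin d) (Fin d) ℂ →ₗ[ℂ] Matrix (Fin d) (Fin d) ℂ) : Prop :=
  ∃ (m : ℕ) (K : Fin m → Matrix (Fin d) (Fin d) ℂ),
    (∀ X, T X = ∑ μ, K μ * X * (K μ)ᴴ) ∧ (∑ μ, (K μ)ᴴ * K μ = 1)

/-- A density matrix: positive semidefinite with unit trace. -/
def IsDensity {d : ℕ} (ρ : Matrix (Fin d) (Fin d) ℂ) : Prop :=
  ρ.PosSemidef ∧ ρ.trace = 1

namespace ChiAux

variable {d : ℕ}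

/-- conjugated complex diagonal -/
noncomputable def cdC (u : Matrix (Fin d) (Fin d) ℂ) (c : Fin d → ℂ) : Matrix (Fin d) (Fin d) ℂ :=
  u * Matrix.diagonal c * star u

/-- conjugated real diagonal -/
noncomputable def cd (u : Matrix (Fin d) (Fin d) ℂ) (g : Fin d → ℝ) : Matrix (Fin d) (Fin d) ℂ :=
  cdC u (fun i => (g i : ℂ))



variable {u : Matrix (Fin d) (Fin d) ℂ}

variable {v : Matrix (Fin d) (Fin d) ℂ}

lemma cdC_congr {a b : Fin d → ℂ} (h : ∀ i, a i = b i) : cdC u a = cdC u b := by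
  have : a = b := funext h
  rw [this]

lemma cdC_mul (hu : star u * u = 1) (a b : Fin d → ℂ) :
    cdC u a * cdC u b = cdC u (fun i => a i * b i) := by
  simp only [cdC]
  rw [show u * Matrix.diagonal a * star u * (u * Matrix.diagonal b * star u)
      = u * Matrix.diagonal a * (star u * u) * Matrix.diagonal b * star u by
    simp only [mul_assoc], hu, mul_one, show u * Matrix.diagonal a * Matrix.diagonal b
      = u * (Matrix.diagonal a * Matrix.diagonal b) by simp only [mul_assoc],
    Matrix.diagonal_mul_diagonal]

lemma cdC_add (a b : Fin d → ℂ) : cdC u a + cdC u b = cdC u (fun i => a i + b i) := by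
  simp only [cdC, ← add_mul, ← mul_add, ← Matrix.diagonal_add]

lemma cdC_smul (r : ℂ) (a : Fin d → ℂ) : r • cdC u a = cdC u (fun i => r * a i) := by
  have : Matrix.diagonal (fun i => r * a i) = r • Matrix.diagonal a := by
    rw [← Matrix.diagonal_smul]; rfl
  rw [cdC, cdC, this, Matrix.mul_smul, Matrix.smul_mul]

lemma cdC_sub (a b : Fin d → ℂ) : cdC u a - cdC u b = cdC u (fun i => a i - b i) := by
  simp only [cdC, ← sub_mul, ← mul_sub, ← Matrix.diagonal_sub]

lemma cdC_one (hu' : u * star u = 1) : cdC u (fun _ => 1) = 1 := by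
  have : (Matrix.diagonal (fun _ : Fin d => (1 : ℂ))) = 1 := Matrix.diagonal_one
  rw [cdC, this, Matrix.mul_one, hu']

lemma cdC_trace (hu : star u * u = 1) (a : Fin d → ℂ) :
    (cdC u a).trace = ∑ i, a i := by
  rw [cdC, Matrix.trace_mul_cycle, hu, one_mul, Matrix.trace_diagonal]

lemma cdC_pow (hu : star u * u = 1) (hu' : u * star u = 1) (a : Fin d → ℂ) (n : ℕ) :
    cdC u a ^ n = cdC u (fun i => a i ^ n) := by
  induction n with
  | zero => rw [pow_zero, ← cdC_one hu']; exact cdC_congr fun i => (pow_zero _).symm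
  | succ n ih =>
    rw [pow_succ, ih, cdC_mul hu]
    exact cdC_congr fun i => (pow_succ _ _).symm

lemma cdC_conjTranspose (a : Fin d → ℂ) : (cdC u a)ᴴ = cdC u (fun i => star (a i)) := by
  simp only [cdC, ← Matrix.star_eq_conjTranspose]
  rw [StarMul.star_mul (u * Matrix.diagonal a) (star u),
    StarMul.star_mul u (Matrix.diagonal a), star_star]
  simp only [Matrix.star_eq_conjTranspose, Matrix.diagonal_conjTranspose, mul_assoc]
  rfl

lemma cd_isHermitian (g : Fin d → ℝ) : (cd u g).IsHermitian := by
  rw [Matrix.IsHermitian, cd, cdC_conjTranspose]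
  exact cdC_congr fun i => by simp

lemma aeval_cdC (hu : star u * u = 1) (hu' : u * star u = 1) (a : Fin d → ℂ) (p : Polynomial ℂ) :
    (Polynomial.aeval (cdC u a)) p = cdC u (fun i => p.eval (a i)) := by
  induction p using Polynomial.induction_on' with
  | add p q hp hq =>
    rw [map_add, hp, hq, cdC_add]
    exact cdC_congr fun i => by simp
  | monomial n c =>
    rw [Polynomial.aeval_monomial, cdC_pow hu hu']
    have : (algebraMap ℂ (Matrix (Fin d) (Fin d) ℂ)) c = c • (1 : Matrix (Fin d) (Fin d) ℂ) := by
      simp [Algebra.algebraMap_eq_smul_one]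
    rw [this, smul_mul_assoc, Matrix.one_mul, cdC_smul]
    exact cdC_congr fun i => by simp [Polynomial.eval_monomial]

lemma cd_funext (hu : star u * u = 1) (hu' : u * star u = 1)
    (hv : star v * v = 1) (hv' : v * star v = 1)
    (a b : Fin d → ℝ) (f : ℝ → ℝ) (h : cd u a = cd v b) :
    cd u (fun i => f (a i)) = cd v (fun i => f (b i)) := by
  classical
  set s : Finset ℝ := Finset.image a Finset.univ ∪ Finset.image b Finset.univ with hs
  have hinj : Set.InjOn (id : ℝ → ℝ) s := Function.injective_id.injOn
  set p : Polynomial ℝ := Lagrange.interpolate s id f with hp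
  have heval : ∀ x ∈ s, p.eval x = f x := by
    intro x hx
    have := Lagrange.eval_interpolate_at_node f hinj hx
    exact this
  set q : Polynomial ℂ := p.map (algebraMap ℝ ℂ) with hq
  have hevalC : ∀ x ∈ s, q.eval (x : ℂ) = ((f x : ℝ) : ℂ) := by
    intro x hx
    rw [hq, Polynomial.eval_map]
    have : Polynomial.eval₂ (algebraMap ℝ ℂ) ((algebraMap ℝ ℂ) x) p
        = (algebraMap ℝ ℂ) (p.eval x) := Polynomial.eval₂_at_apply (algebraMap ℝ ℂ) x
    simpa [heval x hx] using this
  have hmema : ∀ i, a i ∈ s := fun i =>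
    Finset.mem_union_left _ (Finset.mem_image_of_mem a (Finset.mem_univ i))
  have hmemb : ∀ i, b i ∈ s := fun i =>
    Finset.mem_union_right _ (Finset.mem_image_of_mem b (Finset.mem_univ i))
  have h1 : cd u (fun i => f (a i)) = Polynomial.aeval (cd u a) q := by
    rw [cd, cd, aeval_cdC hu hu']
    exact cdC_congr fun i => by rw [hevalC (a i) (hmema i)]
  have h2 : cd v (fun i => f (b i)) = Polynomial.aeval (cd v b) q := by
    rw [cd, cd, aeval_cdC hv hv']
    exact cdC_congr fun i => by rw [hevalC (b i) (hmemb i)]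
  rw [h1, h2, h]

lemma spectral_cd {M : Matrix (Fin d) (Fin d) ℂ} (hM : M.IsHermitian) :
    M = cd (hM.eigenvectorUnitary : Matrix (Fin d) (Fin d) ℂ) hM.eigenvalues :=
  hM.spectral_theorem

lemma eigU_unitary₁ {M : Matrix (Fin d) (Fin d) ℂ} (hM : M.IsHermitian) :
    star (hM.eigenvectorUnitary : Matrix (Fin d) (Fin d) ℂ) *
      (hM.eigenvectorUnitary : Matrix (Fin d) (Fin d) ℂ) = 1 :=
  Matrix.mem_unitaryGroup_iff'.mp hM.eigenvectorUnitary.2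

lemma eigU_unitary₂ {M : Matrix (Fin d) (Fin d) ℂ} (hM : M.IsHermitian) :
    (hM.eigenvectorUnitary : Matrix (Fin d) (Fin d) ℂ) *
      star (hM.eigenvectorUnitary : Matrix (Fin d) (Fin d) ℂ) = 1 :=
  Matrix.mem_unitaryGroup_iff.mp hM.eigenvectorUnitary.2

lemma mrpow_cd (hu : star u * u = 1) (hu' : u * star u = 1) (g : Fin d → ℝ) (β : ℝ) :
    mrpow (cd u g) β = cd u (fun i => g i ^ β) := by
  have hH : (cd u g).IsHermitian := cd_isHermitian g
  have h1 : mrpow (cd u g) β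
      = cd (hH.eigenvectorUnitary : Matrix (Fin d) (Fin d) ℂ)
          (fun i => hH.eigenvalues i ^ β) := by
    rw [mrpow, dif_pos hH]; rfl
  rw [h1]
  exact cd_funext (eigU_unitary₁ hH) (eigU_unitary₂ hH) hu hu' _ _ (fun x => x ^ β)
    (spectral_cd hH).symm

lemma cd_posSemidef (hg : ∀ i, 0 ≤ g i) : (cd u g).PosSemidef := by
  have : (Matrix.diagonal (fun i => ((g i : ℝ) : ℂ))).PosSemidef := by
    refine Matrix.posSemidef_diagonal_iff.mpr fun i => ?_
    simpa using hg i
  simpa [cd, cdC, Matrix.star_eq_conjTranspose] using this.mul_mul_conjTranspose_same u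

lemma traceNorm_cd (hu : star u * u = 1) (hu' : u * star u = 1) (g : Fin d → ℝ) :
    traceNorm (cd u g) = ∑ i, |g i| := by
  have hH := (Matrix.posSemidef_conjTranspose_mul_self (cd u g)).1
  have hsq : cd u (fun i => g i ^ 2) = (cd u g)ᴴ * (cd u g) := by
    rw [cd, cd, cdC_conjTranspose, cdC_mul hu]
    exact cdC_congr fun i => by
      simp only [Complex.star_def, Complex.conj_ofReal]
      push_cast
      ring
  have h := cd_funext (eigU_unitary₁ hH) (eigU_unitary₂ hH) hu hu' _ _ Real.sqrt
    ((spectral_cd hH).symm.trans hsq.symm)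
  have e1 : traceNorm (cd u g) = (cd (hH.eigenvectorUnitary : Matrix (Fin d) (Fin d) ℂ)
      (fun i => Real.sqrt (hH.eigenvalues i))).trace.re := rfl
  rw [e1, h, cd, cdC_trace hu, Complex.re_sum]
  simp [Real.sqrt_sq_eq_abs]



lemma traceNorm_hermitian {M : Matrix (Fin d) (Fin d) ℂ} (hM : M.IsHermitian) :
    traceNorm M = ∑ i, |hM.eigenvalues i| := by
  conv_lhs => rw [spectral_cd hM]
  exact traceNorm_cd (eigU_unitary₁ hM) (eigU_unitary₂ hM) _

lemma eq_zero_of_eigenvalues_zero {M : Matrix (Fin d) (Fin d) ℂ} (hM : M.IsHermitian)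
    (h : ∀ i, hM.eigenvalues i = 0) : M = 0 := by
  rw [spectral_cd hM, cd]
  have : (fun i => ((hM.eigenvalues i : ℝ) : ℂ)) = fun _ => (0 : ℂ) := by
    funext i; rw [h i]; simp
  rw [this]
  simp [cdC]

lemma traceNorm_pos {M : Matrix (Fin d) (Fin d) ℂ} (hM : M.IsHermitian) (hne : M ≠ 0) :
    0 < traceNorm M := by
  rw [traceNorm_hermitian hM]
  have hne' : ∑ i, |hM.eigenvalues i| ≠ 0 := by
    intro h0
    have hall := (Finset.sum_eq_zero_iff_of_nonneg (fun i _ => abs_nonneg _)).mp h0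
    exact hne (eq_zero_of_eigenvalues_zero hM fun i =>
      abs_eq_zero.mp (hall i (Finset.mem_univ i)))
  exact lt_of_le_of_ne (Finset.sum_nonneg fun i _ => abs_nonneg _) (Ne.symm hne')

lemma posSemidef_smul_real {M : Matrix (Fin d) (Fin d) ℂ} (hM : M.PosSemidef) {c : ℝ}
    (hc : 0 ≤ c) : ((c : ℂ) • M).PosSemidef := by
  refine Matrix.PosSemidef.of_dotProduct_mulVec_nonneg ?_ ?_
  · rw [Matrix.IsHermitian, Matrix.conjTranspose_smul, hM.1.eq]
    simp [Complex.conj_ofReal]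
  · intro x
    rw [Matrix.smul_mulVec, dotProduct_smul]
    have h0 : (0 : ℂ) ≤ (c : ℂ) := by
      rw [Complex.le_def]; simp [hc]
    exact mul_nonneg h0 (hM.dotProduct_mulVec_nonneg x)

lemma traceNorm_smul_real (A : Matrix (Fin d) (Fin d) ℂ) {c : ℝ} (hc : 0 ≤ c) :
    traceNorm ((c : ℂ) • A) = c * traceNorm A := by
  have hH := (Matrix.posSemidef_conjTranspose_mul_self A).1
  have hH' := (Matrix.posSemidef_conjTranspose_mul_self ((c : ℂ) • A)).1
  have hsq : ((c : ℂ) • A)ᴴ * ((c : ℂ) • A) = cd (hH.eigenvectorUnitary : Matrix (Fin d) (Fin d) ℂ)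
      (fun i => c ^ 2 * hH.eigenvalues i) := by
    rw [Matrix.conjTranspose_smul, Matrix.smul_mul, Matrix.mul_smul, smul_smul]
    conv_lhs => rw [spectral_cd hH]
    rw [cd, cd, cdC_smul]
    exact cdC_congr fun i => by
      simp only [Complex.star_def, Complex.conj_ofReal]
      push_cast
      ring
  have h := cd_funext (eigU_unitary₁ hH') (eigU_unitary₂ hH') (eigU_unitary₁ hH)
    (eigU_unitary₂ hH) _ _ Real.sqrt ((spectral_cd hH').symm.trans hsq)
  have e1 : traceNorm ((c : ℂ) • A) = (cd (hH'.eigenvectorUnitary : Matrix (Fin d) (Fin d) ℂ)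
      (fun i => Real.sqrt (hH'.eigenvalues i))).trace.re := rfl
  have e2 : traceNorm A = (cd (hH.eigenvectorUnitary : Matrix (Fin d) (Fin d) ℂ)
      (fun i => Real.sqrt (hH.eigenvalues i))).trace.re := rfl
  rw [e1, e2, h, cd, cd, cdC_trace (eigU_unitary₁ hH), cdC_trace (eigU_unitary₁ hH),
    Complex.re_sum, Complex.re_sum, Finset.mul_sum]
  refine Finset.sum_congr rfl fun i _ => ?_
  simp only [Complex.ofReal_re]
  rw [Real.sqrt_mul (sq_nonneg c), Real.sqrt_sq hc]

lemma cd_posDef (hu : star u * u = 1) (hu' : u * star u = 1) {g : Fin d → ℝ}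
    (hg : ∀ i, 0 < g i) : (cd u g).PosDef := by
  refine Matrix.PosDef.of_dotProduct_mulVec_pos (cd_isHermitian g) fun x hx => ?_
  classical
  set y : Fin d → ℂ := star u *ᵥ x with hy
  have hyne : y ≠ 0 := by
    intro h0
    apply hx
    have : u *ᵥ (star u *ᵥ x) = u *ᵥ 0 := by rw [← hy, h0]
    rwa [Matrix.mulVec_mulVec, hu', Matrix.one_mulVec, Matrix.mulVec_zero] at this
  have hform : star x ⬝ᵥ (cd u g) *ᵥ x = star y ⬝ᵥ (Matrix.diagonal (fun i => ((g i : ℝ) : ℂ))) *ᵥ y := by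
    rw [cd, cdC]
    rw [show u * Matrix.diagonal (fun i => ((g i : ℝ) : ℂ)) * star u
        = u * (Matrix.diagonal (fun i => ((g i : ℝ) : ℂ)) * star u) by rw [mul_assoc]]
    rw [← Matrix.mulVec_mulVec, Matrix.dotProduct_mulVec, ← Matrix.mulVec_mulVec]
    congr 1
    rw [hy, Matrix.star_mulVec, Matrix.star_eq_conjTranspose, Matrix.conjTranspose_conjTranspose]
  rw [hform]
  have hdiag : star y ⬝ᵥ (Matrix.diagonal (fun i => ((g i : ℝ) : ℂ))) *ᵥ y
      = ((∑ i, g i * Complex.normSq (y i) : ℝ) : ℂ) := by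
    rw [dotProduct, Complex.ofReal_sum]
    refine Finset.sum_congr rfl fun i _ => ?_
    rw [Matrix.mulVec_diagonal]
    push_cast
    rw [Pi.star_apply, Complex.star_def,
      show (starRingEnd ℂ) (y i) * (((g i : ℝ) : ℂ) * y i)
        = ((g i : ℝ) : ℂ) * ((y i) * (starRingEnd ℂ) (y i)) by ring, Complex.mul_conj]
  rw [hdiag]
  have hpos : 0 < ∑ i, g i * Complex.normSq (y i) := by
    obtain ⟨j, hj⟩ := Function.ne_iff.mp hyne
    refine Finset.sum_pos' (fun i _ => mul_nonneg (hg i).le (Complex.normSq_nonneg _)) ⟨j, Finset.mem_univ j, ?_⟩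
    exact mul_pos (hg j) (Complex.normSq_pos.mpr hj)
  rw [Complex.lt_def]
  simp [hpos]

lemma conj_mul {v : Matrix (Fin d) (Fin d) ℂ} (hv : star v * v = 1)
    (X Y : Matrix (Fin d) (Fin d) ℂ) :
    v * X * star v * (v * Y * star v) = v * (X * Y) * star v := by
  rw [show v * X * star v * (v * Y * star v) = v * X * (star v * v) * Y * star v by
    simp only [mul_assoc], hv, mul_one]
  simp only [mul_assoc]

lemma conj_mul' {G : Matrix (Fin d) (Fin d) ℂ} (hG : G * star G = 1)
    (X Y : Matrix (Fin d) (Fin d) ℂ) :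
    star G * X * G * (star G * Y * G) = star G * (X * Y) * G := by
  have := conj_mul (v := star G) (by rw [star_star]; exact hG) X Y
  rwa [star_star] at this

lemma trace_conj {v : Matrix (Fin d) (Fin d) ℂ} (hv : star v * v = 1)
    (X : Matrix (Fin d) (Fin d) ℂ) : (v * X * star v).trace = X.trace := by
  rw [Matrix.trace_mul_cycle, hv, one_mul]

lemma trace_conj' {G : Matrix (Fin d) (Fin d) ℂ} (hG : G * star G = 1)
    (X : Matrix (Fin d) (Fin d) ℂ) : (star G * X * G).trace = X.trace := by
  have := trace_conj (v := star G) (by rw [star_star]; exact hG) X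
  rwa [star_star] at this

lemma sign_mul_self (x : ℝ) : Real.sign x * x = |x| := by
  rcases lt_trichotomy x 0 with h | h | h
  · rw [Real.sign_of_neg h, abs_of_neg h]; ring
  · simp [h]
  · rw [Real.sign_of_pos h, abs_of_pos h]; ring

lemma sign_sq_le_one (x : ℝ) : Real.sign x ^ 2 ≤ 1 := by
  rcases lt_trichotomy x 0 with h | h | h
  · rw [Real.sign_of_neg h]; norm_num
  · simp [h]
  · rw [Real.sign_of_pos h]; norm_num

lemma key_ineq {α : ℝ} (hα : α ∈ Set.Ioc (0:ℝ) 1) {S A : Matrix (Fin d) (Fin d) ℂ}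
    (hS : S.PosSemidef) (hA : A.IsHermitian) (htr : S.trace = 1)
    (hsupp : ∀ x, S *ᵥ x = 0 → A *ᵥ x = 0) :
    traceNorm A ^ 2 ≤ ((A * mrpow S (-α) * A * mrpow S (α - 1)).trace).re := by
  classical
  obtain ⟨hα0, hα1⟩ := hα
  set v : Matrix (Fin d) (Fin d) ℂ := (hS.1.eigenvectorUnitary : Matrix (Fin d) (Fin d) ℂ)
    with hvdef
  have hv1 : star v * v = 1 := eigU_unitary₁ hS.1
  have hv2 : v * star v = 1 := eigU_unitary₂ hS.1
  set s : Fin d → ℝ := hS.1.eigenvalues with hsdef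
  have hs0 : ∀ i, 0 ≤ s i := hS.eigenvalues_nonneg
  have hSspec : S = cd v s := hS.1.spectral_theorem
  have hP1 : mrpow S (-α) = cd v (fun i => s i ^ (-α)) := by
    rw [hSspec, mrpow_cd hv1 hv2]
  have hP2 : mrpow S (α - 1) = cd v (fun i => s i ^ (α - 1)) := by
    rw [hSspec, mrpow_cd hv1 hv2]
  set B : Matrix (Fin d) (Fin d) ℂ := star v * A * v with hB
  have hAB : A = v * B * star v := by
    rw [hB]
    rw [show v * (star v * A * v) * star v = (v * star v) * A * (v * star v) by
      simp only [mul_assoc], hv2, one_mul, mul_one]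
  have hBH : Bᴴ = B := by
    rw [hB]
    simp only [Matrix.conjTranspose_mul, Matrix.star_eq_conjTranspose,
      Matrix.conjTranspose_conjTranspose, hA.eq]
    simp only [mul_assoc]
  have hBconj : ∀ i j, B j i = star (B i j) := by
    intro i j
    conv_lhs => rw [← hBH]
    rw [Matrix.conjTranspose_apply]
  -- vanishing of B on the kernel of S
  have hcol : ∀ i, S *ᵥ (fun r => v r i) = (s i : ℂ) • (fun r => v r i) := by
    intro i
    funext r
    have hSv : S * v = v * Matrix.diagonal (fun i => ((s i : ℝ) : ℂ)) := by
      rw [hSspec, cd, cdC, mul_assoc, mul_assoc, hv1, mul_one]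
    calc (S *ᵥ fun r => v r i) r = (S * v) r i := by
          rw [Matrix.mul_apply, Matrix.mulVec, dotProduct]
        _ = v r i * (s i : ℂ) := by rw [hSv, Matrix.mul_diagonal]
        _ = ((s i : ℂ) • fun r => v r i) r := by
          simp [mul_comm]
  have hAv : ∀ i, s i = 0 → ∀ c, (A * v) c i = 0 := by
    intro i hi c
    have h1 : (A *ᵥ fun r => v r i) = 0 := by
      apply hsupp
      rw [hcol i, hi]
      simp
    have h2 : (A * v) c i = (A *ᵥ fun r => v r i) c := by
      rw [Matrix.mul_apply, Matrix.mulVec, dotProduct]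
    rw [h2, h1]
    rfl
  have hB0 : ∀ i, s i = 0 → ∀ j, B j i = 0 := by
    intro i hi j
    rw [hB, mul_assoc, Matrix.mul_apply]
    exact Finset.sum_eq_zero fun c _ => by rw [hAv i hi c, mul_zero]
  have hB0' : ∀ i, s i = 0 → ∀ j, B i j = 0 := by
    intro i hi j
    rw [hBconj, hB0 i hi j, star_zero]
  -- the χ² value
  set R : ℝ := ∑ i, ∑ j, Complex.normSq (B i j) * (s j ^ (-α)) * (s i ^ (α - 1)) with hR
  set D1 : Matrix (Fin d) (Fin d) ℂ := Matrix.diagonal (fun i => ((s i ^ (-α) : ℝ) : ℂ)) with hD1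
  set D2 : Matrix (Fin d) (Fin d) ℂ := Matrix.diagonal (fun i => ((s i ^ (α - 1) : ℝ) : ℂ))
    with hD2
  have hchi : ((A * mrpow S (-α) * A * mrpow S (α - 1)).trace).re = R := by
    rw [hP1, hP2]
    have hprod : A * cd v (fun i => s i ^ (-α)) * A * cd v (fun i => s i ^ (α - 1))
        = v * (B * D1 * (B * D2)) * star v := by
      conv_lhs => rw [hAB]
      rw [cd, cd, cdC, cdC, ← hD1, ← hD2]
      rw [conj_mul hv1, conj_mul hv1, conj_mul hv1]
      simp only [mul_assoc]
    rw [hprod, trace_conj hv1]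
    have hentry : ∀ i, (B * D1 * (B * D2)) i i
        = ((∑ j, Complex.normSq (B i j) * (s j ^ (-α)) * (s i ^ (α - 1)) : ℝ) : ℂ) := by
      intro i
      rw [Matrix.mul_apply, Complex.ofReal_sum]
      refine Finset.sum_congr rfl fun j _ => ?_
      rw [hD1, hD2, Matrix.mul_diagonal, Matrix.mul_diagonal, hBconj i j]
      rw [show B i j * ((s j ^ (-α) : ℝ) : ℂ) * (star (B i j) * ((s i ^ (α - 1) : ℝ) : ℂ))
          = (B i j * star (B i j)) * ((s j ^ (-α) : ℝ) : ℂ) * ((s i ^ (α - 1) : ℝ) : ℂ) by ring]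
      rw [Complex.star_def, Complex.mul_conj]
      push_cast
      ring
    rw [Matrix.trace]
    simp only [Matrix.diag]
    rw [Finset.sum_congr rfl fun i _ => hentry i, ← Complex.ofReal_sum]
    rw [Complex.ofReal_re]
  -- spectral data of A
  set w : Matrix (Fin d) (Fin d) ℂ := (hA.eigenvectorUnitary : Matrix (Fin d) (Fin d) ℂ)
    with hwdef
  have hw1 : star w * w = 1 := eigU_unitary₁ hA
  have hw2 : w * star w = 1 := eigU_unitary₂ hA
  set μ : Fin d → ℝ := hA.eigenvalues with hμdef
  have hAspec : A = cd w μ := hA.spectral_theorem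
  have htn : traceNorm A = ∑ k, |μ k| := traceNorm_hermitian hA
  set G : Matrix (Fin d) (Fin d) ℂ := star w * v with hG
  have hG1 : star G * G = 1 := by
    rw [hG, StarMul.star_mul, star_star]
    rw [show star v * w * (star w * v) = star v * (w * star w) * v by simp only [mul_assoc],
      hw2, mul_one, hv1]
  have hG2 : G * star G = 1 := by
    rw [hG, StarMul.star_mul, star_star]
    rw [show star w * v * (star v * w) = star w * (v * star v) * w by simp only [mul_assoc],
      hv2, mul_one, hw1]
  set e : Fin d → ℝ := fun k => Real.sign (μ k) with he
  set De : Matrix (Fin d) (Fin d) ℂ := Matrix.diagonal (fun k => ((e k : ℝ) : ℂ)) with hDe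
  set Dμ : Matrix (Fin d) (Fin d) ℂ := Matrix.diagonal (fun k => ((μ k : ℝ) : ℂ)) with hDμ
  set Q : Matrix (Fin d) (Fin d) ℂ := star G * De * G with hQ
  have hBG : B = star G * Dμ * G := by
    rw [hB, hAspec, cd, cdC, hG, ← hDμ, StarMul.star_mul, star_star]
    simp only [mul_assoc]
  have hQentry : ∀ i j, Q i j = ∑ k, star (G k i) * ((e k : ℝ) : ℂ) * G k j := by
    intro i j
    rw [hQ, Matrix.mul_apply]
    refine Finset.sum_congr rfl fun k _ => ?_
    rw [hDe, Matrix.mul_diagonal, Matrix.star_eq_conjTranspose, Matrix.conjTranspose_apply]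
  have hQconj : ∀ i j, star (Q i j) = Q j i := by
    intro i j
    rw [hQentry i j, hQentry j i, star_sum]
    refine Finset.sum_congr rfl fun k _ => ?_
    simp only [star_mul', star_star, Complex.star_def, Complex.conj_conj, Complex.conj_ofReal]
    ring
  -- the trace-norm as a sum
  have hQB : ∑ i, ∑ j, Q i j * B j i = ((∑ k, |μ k| : ℝ) : ℂ) := by
    have h1 : ∑ i, ∑ j, Q i j * B j i = (Q * B).trace := by
      rw [Matrix.trace]
      simp only [Matrix.diag]
      exact Finset.sum_congr rfl fun i _ => (Matrix.mul_apply).symm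
    rw [h1, hQ, hBG, conj_mul' hG2, trace_conj' hG2, hDe, hDμ,
      Matrix.diagonal_mul_diagonal, Matrix.trace_diagonal, Complex.ofReal_sum]
    refine Finset.sum_congr rfl fun k _ => ?_
    rw [← Complex.ofReal_mul, sign_mul_self]
  -- row and column bounds for Q
  have hGcol : ∀ i, ∑ k, Complex.normSq (G k i) = 1 := by
    intro i
    have h1 : (star G * G) i i = 1 := by rw [hG1]; simp
    rw [Matrix.mul_apply] at h1
    have h2 : ∀ k, (star G) i k * G k i = ((Complex.normSq (G k i) : ℝ) : ℂ) := by
      intro k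
      rw [Matrix.star_eq_conjTranspose, Matrix.conjTranspose_apply, Complex.star_def,
        mul_comm, Complex.mul_conj]
    rw [Finset.sum_congr rfl fun k _ => h2 k, ← Complex.ofReal_sum] at h1
    exact_mod_cast h1
  have hQrowC : ∀ i, ∑ j, Complex.normSq (Q i j) = ∑ k, e k ^ 2 * Complex.normSq (G k i) := by
    intro i
    have h1 : ∑ j, (Q i j * star (Q i j)) = (Q * Q) i i := by
      rw [Matrix.mul_apply]
      exact Finset.sum_congr rfl fun j _ => by rw [hQconj i j]
    have h2 : Q * Q = star G * (De * De) * G := by rw [hQ, conj_mul' hG2]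
    have h3 : (star G * (De * De) * G) i i
        = ((∑ k, e k ^ 2 * Complex.normSq (G k i) : ℝ) : ℂ) := by
      rw [hDe, Matrix.diagonal_mul_diagonal, Matrix.mul_apply, Complex.ofReal_sum]
      refine Finset.sum_congr rfl fun k _ => ?_
      rw [show (star G * Matrix.diagonal fun k => ((e k : ℝ) : ℂ) * ((e k : ℝ) : ℂ)) i k
          = (star G) i k * (((e k : ℝ) : ℂ) * ((e k : ℝ) : ℂ)) from by
        rw [Matrix.mul_diagonal]]
      rw [Matrix.star_eq_conjTranspose, Matrix.conjTranspose_apply, Complex.star_def]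
      rw [show (starRingEnd ℂ) (G k i) * (((e k : ℝ) : ℂ) * ((e k : ℝ) : ℂ)) * G k i
          = ((e k : ℝ) : ℂ) * ((e k : ℝ) : ℂ) * (G k i * (starRingEnd ℂ) (G k i)) by ring,
        Complex.mul_conj]
      push_cast
      ring
    have h4 : ∑ j, (Q i j * star (Q i j)) = ((∑ j, Complex.normSq (Q i j) : ℝ) : ℂ) := by
      rw [Complex.ofReal_sum]
      refine Finset.sum_congr rfl fun j _ => by
        rw [Complex.star_def, Complex.mul_conj]
    have h5 := h4.symm.trans (h1.trans (by rw [h2, h3] :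
      (Q * Q) i i = ((∑ k, e k ^ 2 * Complex.normSq (G k i) : ℝ) : ℂ)))
    exact_mod_cast h5
  have hQrow : ∀ i, ∑ j, Complex.normSq (Q i j) ≤ 1 := by
    intro i
    rw [hQrowC i]
    calc ∑ k, e k ^ 2 * Complex.normSq (G k i)
        ≤ ∑ k, 1 * Complex.normSq (G k i) := by
          refine Finset.sum_le_sum fun k _ => ?_
          exact mul_le_mul_of_nonneg_right (sign_sq_le_one _) (Complex.normSq_nonneg _)
      _ = 1 := by simp only [one_mul]; exact hGcol i
  have hQcol : ∀ j, ∑ i, Complex.normSq (Q i j) ≤ 1 := by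
    intro j
    have : ∀ i, Complex.normSq (Q i j) = Complex.normSq (Q j i) := by
      intro i
      rw [← hQconj j i, Complex.star_def, Complex.normSq_conj]
    rw [Finset.sum_congr rfl fun i _ => this i]
    exact hQrow j
  -- total mass of s
  have hsum_s : ∑ i, s i = 1 := by
    have h1 : S.trace = ((∑ i, s i : ℝ) : ℂ) := by
      rw [hSspec, cd, cdC_trace hv1, Complex.ofReal_sum]
    rw [htr] at h1
    exact_mod_cast h1.symm
  -- Cauchy-Schwarz setup
  set x : Fin d × Fin d → ℝ := fun p =>
    ‖Q p.1 p.2‖ * (s p.1 ^ ((1 - α)/2) * s p.2 ^ (α/2)) with hx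
  set y : Fin d × Fin d → ℝ := fun p =>
    ‖B p.2 p.1‖ * (s p.1 ^ ((α - 1)/2) * s p.2 ^ (-α/2)) with hy
  have hxy : ∀ p : Fin d × Fin d,
      ‖Q p.1 p.2‖ * ‖B p.2 p.1‖ = x p * y p := by
    rintro ⟨i, j⟩
    by_cases hi : s i = 0
    · have hBzero : B j i = 0 := hB0 i hi j
      simp [hx, hy, hBzero]
    · by_cases hj : s j = 0
      · have hBzero : B j i = 0 := hB0' j hj i
        simp [hx, hy, hBzero]
      · have hip : 0 < s i := lt_of_le_of_ne (hs0 i) (Ne.symm hi)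
        have hjp : 0 < s j := lt_of_le_of_ne (hs0 j) (Ne.symm hj)
        rw [hx, hy]
        have hre : x (i, j) * y (i, j)
            = ‖Q i j‖ * ‖B j i‖
              * ((s i ^ ((1 - α)/2) * s i ^ ((α - 1)/2)) * (s j ^ (α/2) * s j ^ (-α/2))) := by
          rw [hx, hy]; ring
        rw [← hx, ← hy, hre, ← Real.rpow_add hip, ← Real.rpow_add hjp,
          show (1 - α)/2 + (α - 1)/2 = 0 by ring, show α/2 + -α/2 = 0 by ring,
          Real.rpow_zero, Real.rpow_zero]
        ring
  -- step 1 : traceNorm A ≤ ∑ x * y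
  have hstep1 : traceNorm A ≤ ∑ p : Fin d × Fin d, x p * y p := by
    rw [htn]
    have h0 : (∑ k, |μ k| : ℝ) = (((∑ k, |μ k| : ℝ) : ℂ)).re := (Complex.ofReal_re _).symm
    rw [h0, ← hQB]
    calc (∑ i, ∑ j, Q i j * B j i).re
        ≤ ‖∑ i, ∑ j, Q i j * B j i‖ := Complex.re_le_norm _
      _ ≤ ∑ i, ‖∑ j, Q i j * B j i‖ := norm_sum_le _ _
      _ ≤ ∑ i, ∑ j, ‖Q i j * B j i‖ :=
          Finset.sum_le_sum fun i _ => norm_sum_le _ _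
      _ = ∑ p : Fin d × Fin d, x p * y p := by
          rw [Fintype.sum_prod_type]
          refine Finset.sum_congr rfl fun i _ => Finset.sum_congr rfl fun j _ => ?_
          rw [norm_mul]
          exact hxy (i, j)
  -- squares of rpow
  have hsqr : ∀ (i : Fin d) (u : ℝ), (s i ^ u) ^ 2 = s i ^ (u * 2) := by
    intro i u
    rw [← Real.rpow_natCast (s i ^ u) 2, ← Real.rpow_mul (hs0 i)]
    norm_num
  -- step 3 : ∑ x² ≤ 1
  have hx2 : ∑ p : Fin d × Fin d, x p ^ 2 ≤ 1 := by
    have hterm : ∀ i j, x (i, j) ^ 2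
        = Complex.normSq (Q i j) * (s i ^ (1 - α) * s j ^ α) := by
      intro i j
      rw [hx]
      rw [show (‖Q i j‖ * (s i ^ ((1 - α)/2) * s j ^ (α/2))) ^ 2
          = ‖Q i j‖ ^ 2 * ((s i ^ ((1 - α)/2)) ^ 2 * (s j ^ (α/2)) ^ 2) by ring,
        hsqr i, hsqr j, Complex.sq_norm,
        show (1 - α)/2 * 2 = 1 - α by ring, show α/2 * 2 = α by ring]
    calc ∑ p : Fin d × Fin d, x p ^ 2
        = ∑ i, ∑ j, Complex.normSq (Q i j) * (s i ^ (1 - α) * s j ^ α) := by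
          rw [Fintype.sum_prod_type]
          exact Finset.sum_congr rfl fun i _ => Finset.sum_congr rfl fun j _ => hterm i j
      _ ≤ ∑ i, ∑ j, Complex.normSq (Q i j) * ((1 - α) * s i + α * s j) := by
          refine Finset.sum_le_sum fun i _ => Finset.sum_le_sum fun j _ => ?_
          refine mul_le_mul_of_nonneg_left ?_ (Complex.normSq_nonneg _)
          exact Real.geom_mean_le_arith_mean2_weighted (by linarith) (le_of_lt hα0)
            (hs0 i) (hs0 j) (by ring)
      _ = (∑ i, (1 - α) * s i * (∑ j, Complex.normSq (Q i j)))
          + (∑ j, α * s j * (∑ i, Complex.normSq (Q i j))) := by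
          have h1 : ∀ i, ∑ j, Complex.normSq (Q i j) * ((1 - α) * s i + α * s j)
              = (1 - α) * s i * (∑ j, Complex.normSq (Q i j))
                + ∑ j, α * s j * Complex.normSq (Q i j) := by
            intro i
            rw [show (fun j => Complex.normSq (Q i j) * ((1 - α) * s i + α * s j))
                = fun j => (1 - α) * s i * Complex.normSq (Q i j)
                  + α * s j * Complex.normSq (Q i j) from funext fun j => by ring]
            rw [Finset.sum_add_distrib, ← Finset.mul_sum]
          rw [Finset.sum_congr rfl fun i _ => h1 i, Finset.sum_add_distrib]
          congr 1
          rw [Finset.sum_comm]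
          exact Finset.sum_congr rfl fun j _ => (Finset.mul_sum _ _ _).symm
      _ ≤ (1 - α) * 1 + α * 1 := by
          refine add_le_add ?_ ?_
          · calc ∑ i, (1 - α) * s i * (∑ j, Complex.normSq (Q i j))
                ≤ ∑ i, (1 - α) * s i := by
                  refine Finset.sum_le_sum fun i _ => ?_
                  exact mul_le_of_le_one_right
                    (mul_nonneg (by linarith) (hs0 i)) (hQrow i)
              _ = (1 - α) * 1 := by rw [← Finset.mul_sum, hsum_s]
          · calc ∑ j, α * s j * (∑ i, Complex.normSq (Q i j))
                ≤ ∑ j, α * s j := by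
                  refine Finset.sum_le_sum fun j _ => ?_
                  exact mul_le_of_le_one_right
                    (mul_nonneg (le_of_lt hα0) (hs0 j)) (hQcol j)
              _ = α * 1 := by rw [← Finset.mul_sum, hsum_s]
      _ = 1 := by ring
  -- step 4 : ∑ y² = R
  have hy2 : ∑ p : Fin d × Fin d, y p ^ 2 = R := by
    have hterm : ∀ i j, y (i, j) ^ 2
        = Complex.normSq (B i j) * (s j ^ (-α)) * (s i ^ (α - 1)) := by
      intro i j
      rw [hy]
      rw [show (‖B j i‖ * (s i ^ ((α - 1)/2) * s j ^ (-α/2))) ^ 2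
          = ‖B j i‖ ^ 2 * ((s j ^ (-α/2)) ^ 2 * (s i ^ ((α - 1)/2)) ^ 2) by ring,
        hsqr i, hsqr j, Complex.sq_norm,
        show (α - 1)/2 * 2 = α - 1 by ring, show -α/2 * 2 = -α by ring]
      rw [hBconj i j, Complex.star_def, Complex.normSq_conj]
      ring
    rw [hR, Fintype.sum_prod_type]
    exact Finset.sum_congr rfl fun i _ => Finset.sum_congr rfl fun j _ => hterm i j
  -- conclusion
  have htn0 : 0 ≤ traceNorm A := by
    rw [htn]
    exact Finset.sum_nonneg fun k _ => abs_nonneg _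
  have hR0 : 0 ≤ R := by
    rw [← hy2]
    exact Finset.sum_nonneg fun p _ => sq_nonneg _
  rw [hchi]
  calc traceNorm A ^ 2 ≤ (∑ p : Fin d × Fin d, x p * y p) ^ 2 :=
        pow_le_pow_left₀ htn0 hstep1 2
    _ ≤ (∑ p : Fin d × Fin d, x p ^ 2) * (∑ p : Fin d × Fin d, y p ^ 2) :=
        Finset.sum_mul_sq_le_sq_mul_sq Finset.univ x y
    _ ≤ 1 * R := by
        rw [hy2]
        exact mul_le_mul_of_nonneg_right hx2 hR0
    _ = R := one_mul R

lemma kraus_psd {m : ℕ} (K : Fin m → Matrix (Fin d) (Fin d) ℂ)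
    {X : Matrix (Fin d) (Fin d) ℂ} (hX : X.PosSemidef) :
    (∑ ν, K ν * X * (K ν)ᴴ).PosSemidef := by
  classical
  refine Finset.sum_induction _ _ (fun a b ha hb => ha.add hb) Matrix.PosSemidef.zero ?_
  exact fun ν _ => hX.mul_mul_conjTranspose_same (K ν)

lemma kraus_trace {m : ℕ} {K : Fin m → Matrix (Fin d) (Fin d) ℂ}
    (hK1 : ∑ ν, (K ν)ᴴ * K ν = 1) (X : Matrix (Fin d) (Fin d) ℂ) :
    (∑ ν, K ν * X * (K ν)ᴴ).trace = X.trace := by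
  rw [Matrix.trace_sum]
  have h1 : ∀ ν : Fin m, (K ν * X * (K ν)ᴴ).trace = ((K ν)ᴴ * K ν * X).trace := by
    intro ν
    rw [Matrix.trace_mul_cycle, mul_assoc]
  rw [Finset.sum_congr rfl fun ν _ => h1 ν, ← Matrix.trace_sum, ← Finset.sum_mul, hK1, one_mul]

lemma kraus_herm {m : ℕ} (K : Fin m → Matrix (Fin d) (Fin d) ℂ)
    {X : Matrix (Fin d) (Fin d) ℂ} (hX : X.IsHermitian) :
    (∑ ν, K ν * X * (K ν)ᴴ).IsHermitian := by
  rw [Matrix.IsHermitian, Matrix.conjTranspose_sum]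
  refine Finset.sum_congr rfl fun ν _ => ?_
  rw [Matrix.conjTranspose_mul, Matrix.conjTranspose_mul, Matrix.conjTranspose_conjTranspose,
    hX.eq, mul_assoc]

end ChiAux

open ChiAux

/-- Trace-norm contraction is upper bounded by the square root of the
χ²_α contraction: for a quantum channel `T` and `α ∈ (0,1]`, if `η` bounds the χ²_α
contraction ratio over all pairs of states (with `σ` full rank), i.e.
`χ²_α(T(ρ),T(σ)) ≤ η χ²_α(ρ,σ)`, then `‖T(ρ)-T(σ)‖₁ ≤ √η ‖ρ-σ‖₁` for all states,
i.e. `η_tr(T) ≤ √(η_χ^α(T))`. -/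
theorem traceNorm_contraction_le_sqrt_chi_contraction (d : ℕ)
    (T : Matrix (Fin d) (Fin d) ℂ →ₗ[ℂ] Matrix (Fin d) (Fin d) ℂ)
    (α η : ℝ) (hα : α ∈ Set.Ioc (0 : ℝ) 1) (hη : 0 ≤ η)
    (hT : IsCPTP T)
    (hchi : ∀ ρ σ : Matrix (Fin d) (Fin d) ℂ, IsDensity ρ → IsDensity σ → σ.PosDef →
      chiAlpha α (T ρ) (T σ) ≤ η * chiAlpha α ρ σ) :
    ∀ ρ σ : Matrix (Fin d) (Fin d) ℂ, IsDensity ρ → IsDensity σ →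
      traceNorm (T ρ - T σ) ≤ Real.sqrt η * traceNorm (ρ - σ) := by
  intro ρ σ hρ hσ
  classical
  obtain ⟨m, K, hKdef, hK1⟩ := hT
  set N : Matrix (Fin d) (Fin d) ℂ := ρ - σ with hN
  have hTd : T ρ - T σ = T N := (map_sub T ρ σ).symm
  by_cases hN0 : N = 0
  · have h0 : traceNorm (0 : Matrix (Fin d) (Fin d) ℂ) = 0 := by
      have := traceNorm_smul_real (0 : Matrix (Fin d) (Fin d) ℂ) (le_refl (0:ℝ))
      simpa using this
    rw [hTd, hN0, map_zero, h0]
    simp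
  have hNH : N.IsHermitian := hρ.1.1.sub hσ.1.1
  have ht : 0 < traceNorm N := traceNorm_pos hNH hN0
  set t : ℝ := traceNorm N with htdef
  have hd : 0 < d := by
    by_contra hd0
    push_neg at hd0
    refine hN0 ?_
    ext i j
    exact absurd i.2 (by omega)
  have hdR : (0:ℝ) < (d : ℝ) := by exact_mod_cast hd
  set W : Matrix (Fin d) (Fin d) ℂ := (hNH.eigenvectorUnitary : Matrix (Fin d) (Fin d) ℂ)
    with hW
  have hw1 : star W * W = 1 := eigU_unitary₁ hNH
  have hw2 : W * star W = 1 := eigU_unitary₂ hNH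
  set lam : Fin d → ℝ := hNH.eigenvalues with hlam
  have hNspec : N = cd W lam := hNH.spectral_theorem
  have htsum : ∑ i, |lam i| = t := (traceNorm_hermitian hNH).symm
  have hlamsum : ∑ i, lam i = 0 := by
    have h1 : N.trace = 0 := by rw [hN, Matrix.trace_sub, hρ.2, hσ.2, sub_self]
    have h2 : N.trace = ((∑ i, lam i : ℝ) : ℂ) := by
      rw [hNspec, cd, cdC_trace hw1, Complex.ofReal_sum]
    rw [h1] at h2
    exact_mod_cast h2.symm
  have hTN_herm : (T N).IsHermitian := by rw [hKdef]; exact kraus_herm K hNH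
  have htn0 : 0 ≤ traceNorm (T N) := by
    rw [traceNorm_hermitian hTN_herm]
    exact Finset.sum_nonneg fun _ _ => abs_nonneg _
  suffices hkey : ∀ ε : ℝ, 0 < ε → ε < 1 → (1 - ε) * traceNorm (T N) ^ 2 ≤ η * t ^ 2 by
    have hmain : traceNorm (T N) ^ 2 ≤ η * t ^ 2 := by
      by_contra hlt
      push_neg at hlt
      set c : ℝ := traceNorm (T N) ^ 2 with hcd
      have hc0 : 0 < c := lt_of_le_of_lt (mul_nonneg hη (sq_nonneg t)) hlt
      have hnum : 0 < c - η * t ^ 2 := by linarith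
      have hε : (0:ℝ) < (c - η * t ^ 2) / (2 * c) := div_pos hnum (by linarith)
      have hε1 : (c - η * t ^ 2) / (2 * c) < 1 := by
        rw [div_lt_one (by linarith)]
        nlinarith [mul_nonneg hη (sq_nonneg t)]
      have h := hkey _ hε hε1
      have hexp : (1 - (c - η * t ^ 2) / (2 * c)) * c = (c + η * t ^ 2) / 2 := by
        field_simp
        ring
      rw [hexp] at h
      linarith
    rw [hTd]
    have h1 : traceNorm (T N) ≤ Real.sqrt (η * t ^ 2) := by
      have h2 := Real.sqrt_le_sqrt hmain
      rwa [Real.sqrt_sq htn0] at h2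
    have h3 : Real.sqrt (η * t ^ 2) = Real.sqrt η * t := by
      rw [Real.sqrt_mul hη, Real.sqrt_sq (le_of_lt ht)]
    rw [h3] at h1
    exact h1
  intro ε hε0 hε1
  have hεc : 0 < 1 - ε := by linarith
  set c : ℝ := (1 - ε) / t with hc
  have hc0 : 0 < c := div_pos hεc ht
  set g : Fin d → ℝ := fun i => (1 - ε) * |lam i| / t + ε / d with hg
  have hgpos : ∀ i, 0 < g i := by
    intro i
    have h1 : 0 ≤ (1 - ε) * |lam i| / t := by positivity
    have h2 : 0 < ε / (d:ℝ) := by positivity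
    rw [hg]
    exact add_pos_of_nonneg_of_pos h1 h2
  have hclam : ∀ i, c * |lam i| ≤ g i := by
    intro i
    have h1 : c * |lam i| = (1 - ε) * |lam i| / t := by rw [hc]; ring
    have h2 : 0 ≤ ε / (d:ℝ) := by positivity
    rw [hg, h1]
    linarith
  set σ' : Matrix (Fin d) (Fin d) ℂ := cd W g with hσ'
  set ρ' : Matrix (Fin d) (Fin d) ℂ := cd W (fun i => g i + c * lam i) with hρ'
  have hglam : ∀ i, 0 ≤ g i + c * lam i := by
    intro i
    have h2 : -(c * lam i) ≤ c * |lam i| := by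
      rw [show -(c * lam i) = c * (-lam i) by ring]
      exact mul_le_mul_of_nonneg_left (neg_le_abs _) hc0.le
    have := hclam i
    linarith
  have hglam' : ∀ i, 0 ≤ g i - c * lam i := by
    intro i
    have h2 : c * lam i ≤ c * |lam i| :=
      mul_le_mul_of_nonneg_left (le_abs_self _) hc0.le
    have := hclam i
    linarith
  have hρ'psd : ρ'.PosSemidef := cd_posSemidef hglam
  have hσ'psd : σ'.PosSemidef := cd_posSemidef fun i => (hgpos i).le
  have hσ'pd : σ'.PosDef := cd_posDef hw1 hw2 hgpos
  have hgsum : ∑ i, g i = 1 := by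
    rw [hg, Finset.sum_add_distrib]
    have h1 : ∑ i, (1 - ε) * |lam i| / t = (1 - ε) / t * ∑ i, |lam i| := by
      rw [Finset.mul_sum]
      exact Finset.sum_congr rfl fun i _ => by ring
    have h2 : ∑ _i : Fin d, ε / (d:ℝ) = ε := by
      rw [Finset.sum_const, Finset.card_univ, Fintype.card_fin, nsmul_eq_mul]
      field_simp
    rw [h1, h2, htsum]
    field_simp
    ring
  have hσ'tr : σ'.trace = 1 := by
    rw [hσ', cd, cdC_trace hw1, ← Complex.ofReal_sum, hgsum, Complex.ofReal_one]
  have hρ'tr : ρ'.trace = 1 := by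
    rw [hρ', cd, cdC_trace hw1, ← Complex.ofReal_sum]
    have : ∑ i, (g i + c * lam i) = 1 := by
      rw [Finset.sum_add_distrib, hgsum, ← Finset.mul_sum, hlamsum, mul_zero, add_zero]
    rw [this, Complex.ofReal_one]
  have hdiffcd : ρ' - σ' = cd W (fun i => c * lam i) := by
    rw [hρ', hσ', cd, cd, cdC_sub]
    exact cdC_congr fun i => by push_cast; ring
  have hdiff2 : ρ' - σ' = (c : ℂ) • N := by
    rw [hdiffcd, hNspec, cd, cd, cdC_smul]
    exact cdC_congr fun i => by push_cast; ring
  -- χ² value of the input pair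
  have hm1 : mrpow σ' (-α) = cd W (fun i => g i ^ (-α)) := by
    rw [hσ', mrpow_cd hw1 hw2]
  have hm2 : mrpow σ' (α - 1) = cd W (fun i => g i ^ (α - 1)) := by
    rw [hσ', mrpow_cd hw1 hw2]
  have hχval : chiAlpha α ρ' σ' = ∑ i, c ^ 2 * lam i ^ 2 * g i ^ (-1:ℝ) := by
    unfold chiAlpha
    rw [hdiffcd, hm1, hm2, cd, cd, cd, cdC_mul hw1, cdC_mul hw1, cdC_mul hw1, cdC_trace hw1]
    have hterm : ∀ i, ((c * lam i : ℝ) : ℂ) * ((g i ^ (-α) : ℝ) : ℂ) * ((c * lam i : ℝ) : ℂ)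
        * ((g i ^ (α - 1) : ℝ) : ℂ) = ((c ^ 2 * lam i ^ 2 * g i ^ (-1:ℝ) : ℝ) : ℂ) := by
      intro i
      have hreal : (c * lam i) * (g i ^ (-α)) * (c * lam i) * (g i ^ (α - 1))
          = c ^ 2 * lam i ^ 2 * g i ^ (-1:ℝ) := by
        rw [show (c * lam i) * (g i ^ (-α)) * (c * lam i) * (g i ^ (α - 1))
            = c ^ 2 * lam i ^ 2 * (g i ^ (-α) * g i ^ (α - 1)) by ring,
          ← Real.rpow_add (hgpos i), show -α + (α - 1) = (-1 : ℝ) by ring]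
      rw [← hreal]
      push_cast
      ring
    rw [Finset.sum_congr rfl fun i _ => hterm i, ← Complex.ofReal_sum, Complex.ofReal_re]
  have hχbound : chiAlpha α ρ' σ' ≤ 1 - ε := by
    rw [hχval]
    have hterm : ∀ i, c ^ 2 * lam i ^ 2 * g i ^ (-1:ℝ) ≤ c ^ 2 * (t / (1 - ε)) * |lam i| := by
      intro i
      by_cases hl : lam i = 0
      · simp [hl]
      · have habs : 0 < |lam i| := abs_pos.mpr hl
        have hlow : (1 - ε) * |lam i| / t ≤ g i := by
          rw [hg]
          have : 0 ≤ ε / (d:ℝ) := by positivity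
          linarith
        have hlowpos : 0 < (1 - ε) * |lam i| / t := by positivity
        have hinv : g i ^ (-1:ℝ) ≤ ((1 - ε) * |lam i| / t)⁻¹ := by
          rw [Real.rpow_neg_one]
          exact inv_anti₀ hlowpos hlow
        calc c ^ 2 * lam i ^ 2 * g i ^ (-1:ℝ)
            ≤ c ^ 2 * lam i ^ 2 * ((1 - ε) * |lam i| / t)⁻¹ :=
              mul_le_mul_of_nonneg_left hinv (by positivity)
          _ = c ^ 2 * (t / (1 - ε)) * |lam i| := by
              have e1 : ((1 - ε) * |lam i| / t)⁻¹ = t / (1 - ε) * |lam i|⁻¹ := by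
                rw [inv_div, div_mul_eq_div_div, div_eq_mul_inv (t / (1 - ε))]
              rw [e1, show lam i ^ 2 = |lam i| ^ 2 from (sq_abs _).symm,
                show c ^ 2 * |lam i| ^ 2 * (t / (1 - ε) * |lam i|⁻¹)
                  = c ^ 2 * (t / (1 - ε)) * (|lam i| * (|lam i| * |lam i|⁻¹)) by ring,
                mul_inv_cancel₀ habs.ne', mul_one]
    calc ∑ i, c ^ 2 * lam i ^ 2 * g i ^ (-1:ℝ)
        ≤ ∑ i, c ^ 2 * (t / (1 - ε)) * |lam i| := Finset.sum_le_sum fun i _ => hterm i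
      _ = c ^ 2 * (t / (1 - ε)) * t := by rw [← Finset.mul_sum, htsum]
      _ = 1 - ε := by
          rw [hc]
          field_simp
  -- push through the channel
  have hρ'den : IsDensity ρ' := ⟨hρ'psd, hρ'tr⟩
  have hσ'den : IsDensity σ' := ⟨hσ'psd, hσ'tr⟩
  have hchiT : chiAlpha α (T ρ') (T σ') ≤ η * (1 - ε) :=
    le_trans (hchi ρ' σ' hρ'den hσ'den hσ'pd) (mul_le_mul_of_nonneg_left hχbound hη)
  have hTσpsd : (T σ').PosSemidef := by rw [hKdef]; exact kraus_psd K hσ'psd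
  have hTσtr : (T σ').trace = 1 := by rw [hKdef, kraus_trace hK1, hσ'tr]
  have hTρpsd : (T ρ').PosSemidef := by rw [hKdef]; exact kraus_psd K hρ'psd
  have hAherm : (T ρ' - T σ').IsHermitian := by
    rw [← map_sub, hdiffcd, hKdef]
    exact kraus_herm K (cd_isHermitian _)
  have h2σ : σ' + σ' - ρ' = cd W (fun i => g i - c * lam i) := by
    rw [hσ', hρ', cd, cd, cd, cdC_add, cdC_sub]
    exact cdC_congr fun i => by push_cast; ring
  have hpsd2 : (T (σ' + σ' - ρ')).PosSemidef := by
    rw [hKdef]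
    exact kraus_psd K (by rw [h2σ]; exact cd_posSemidef hglam')
  have hsupp : ∀ x, (T σ') *ᵥ x = 0 → (T ρ' - T σ') *ᵥ x = 0 := by
    intro x hx
    have hTsum : T ρ' + T (σ' + σ' - ρ') = T σ' + T σ' := by
      rw [← map_add, ← map_add]
      congr 1
      abel
    have hq1 : star x ⬝ᵥ (T ρ') *ᵥ x + star x ⬝ᵥ (T (σ' + σ' - ρ')) *ᵥ x = 0 := by
      have h := congrArg (fun M => star x ⬝ᵥ M *ᵥ x) hTsum
      simp only [Matrix.add_mulVec, dotProduct_add] at h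
      rw [h, hx]
      simp
    have h01 : star x ⬝ᵥ (T ρ') *ᵥ x = 0 := by
      have hb := hpsd2.dotProduct_mulVec_nonneg x
      have ha := hTρpsd.dotProduct_mulVec_nonneg x
      have hle : star x ⬝ᵥ (T ρ') *ᵥ x ≤ 0 := by
        rw [show star x ⬝ᵥ (T ρ') *ᵥ x = -(star x ⬝ᵥ (T (σ' + σ' - ρ')) *ᵥ x) by
          linear_combination hq1]
        simpa using hb
      exact le_antisymm hle ha
    have hzero : (T ρ') *ᵥ x = 0 := (hTρpsd.dotProduct_mulVec_zero_iff x).mp h01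
    rw [Matrix.sub_mulVec, hzero, hx, sub_zero]
  have hkey0 : traceNorm (T ρ' - T σ') ^ 2 ≤ chiAlpha α (T ρ') (T σ') :=
    key_ineq hα hTσpsd hAherm hTσtr hsupp
  have htnA : traceNorm (T ρ' - T σ') = c * traceNorm (T N) := by
    rw [← map_sub, hdiff2, LinearMap.map_smul, traceNorm_smul_real _ hc0.le]
  have hfinal : (c * traceNorm (T N)) ^ 2 ≤ η * (1 - ε) := by
    rw [← htnA]
    exact le_trans hkey0 hchiT
  have ht2 : 0 < t ^ 2 := by positivity
  have h : (1 - ε) ^ 2 / t ^ 2 * traceNorm (T N) ^ 2 ≤ η * (1 - ε) := by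
    have hcs : (c * traceNorm (T N)) ^ 2 = (1 - ε) ^ 2 / t ^ 2 * traceNorm (T N) ^ 2 := by
      rw [hc]
      ring
    rw [← hcs]
    exact hfinal
  refine le_of_mul_le_mul_left ?_ hεc
  calc (1 - ε) * ((1 - ε) * traceNorm (T N) ^ 2) = (1 - ε) ^ 2 * traceNorm (T N) ^ 2 := by ring
    _ = ((1 - ε) ^ 2 / t ^ 2 * traceNorm (T N) ^ 2) * t ^ 2 := by field_simp
    _ ≤ (η * (1 - ε)) * t ^ 2 := mul_le_mul_of_nonneg_right h ht2.le
    _ = (1 - ε) * (η * t ^ 2) := by ring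
end
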